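/- arXiv:1608.04592 — 4 statements merged into one kernel-verified Lean document; each statement's English description precedes it below -/
import Mathlib

section
/- For any variable x and data constraint φ, the existentially quantified constraint ∃x.φ is logically equivalent to the result of syntactic existential quantification ∃fun_x(φ), where ∃fun_x(φ) equals φ[t/x] for the least determinant t of x in φ if x has a determinant in φ, and equals ∃x.φ otherwise. -/
/-- Data terms over variables `V` and data `D`. -/
inductive DTerm (V D : Type) where
  | var : V → DTerm V D
  | const : D → DTerm V D
  | app : (List D → D) → List (DTerm V D) → DTerm V D

/-- Data atoms. -/
inductive Atom (V D : Type) where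
  | bot : Atom V D
  | top : Atom V D
  | eq : DTerm V D → DTerm V D → Atom V D
  | rel : (List D → Prop) → List (DTerm V D) → Atom V D

/-- Data literals: atoms or negated atoms. -/
inductive Lit (V D : Type) where
  | pos : Atom V D → Lit V D
  | neg : Atom V D → Lit V D

/-- Data constraints: existential quantifications over a conjunction of literals. -/
inductive DC (V D : Type) where
  | ex : V → DC V D → DC V D
  | conj : List (Lit V D) → DC V D

/-- Data assignments: partial functions from variables to data (`none` = nil). -/
abbrev Assg (V D : Type) := V → Option D

/-- Term evaluation; returns `none` (nil) if some variable is undefined. -/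
def evalT (σ : Assg V D) : DTerm V D → Option D
  | .var x => σ x
  | .const d => some d
  | .app f ts => (ts.attach.mapM (fun t => evalT σ t.1)).map f
decreasing_by simp only [DTerm.app.sizeOf_spec]; have := List.sizeOf_lt_of_mem t.2; omega

/-- Variables of a term. -/
def varsT : DTerm V D → List V
  | .var x => [x]
  | .const _ => []
  | .app _ ts => ts.attach.flatMap (fun t => varsT t.1)
decreasing_by simp only [DTerm.app.sizeOf_spec]; have := List.sizeOf_lt_of_mem t.2; omega

def varsA : Atom V D → List V
  | .bot => []
  | .top => []
  | .eq t1 t2 => varsT t1 ++ varsT t2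
  | .rel _ ts => ts.flatMap varsT

def varsL : Lit V D → List V
  | .pos a => varsA a
  | .neg a => varsA a

/-- Free variables of a data constraint. -/
def freeDC [DecidableEq V] : DC V D → List V
  | .ex y φ => (freeDC φ).filter (fun z => z ≠ y)
  | .conj ls => ls.flatMap varsL

/-- Variables occurring (in atoms of) a data constraint. -/
def varsDC : DC V D → List V
  | .ex _ φ => varsDC φ
  | .conj ls => ls.flatMap varsL

/-- Bound variables (quantifier prefix) of a data constraint. -/
def boundDC : DC V D → List V
  | .ex y φ => y :: boundDC φ
  | .conj _ => []

/-- Literals of the conjunctive kernel of a data constraint. -/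
def lits : DC V D → List (Lit V D)
  | .ex _ φ => lits φ
  | .conj ls => ls

def symmEq : Lit V D → Option (Lit V D)
  | .pos (.eq t1 t2) => some (.pos (.eq t2 t1))
  | _ => none

/-- ≐-symmetric closure of the kernel literals. -/
def litsym (φ : DC V D) : List (Lit V D) := lits φ ++ (lits φ).filterMap symmEq

/-- Satisfaction of atoms. -/
def satA (σ : Assg V D) : Atom V D → Prop
  | .bot => False
  | .top => True
  | .eq t1 t2 => ∃ d, evalT σ t1 = some d ∧ evalT σ t2 = some d
  | .rel R ts => ∃ ds, ts.mapM (evalT σ) = some ds ∧ R ds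

/-- Satisfaction of literals. -/
def satL (σ : Assg V D) : Lit V D → Prop
  | .pos a => satA σ a
  | .neg a => (∀ x ∈ varsA a, (σ x).isSome) ∧ ¬ satA σ a

/-- Entailment of data constraints. -/
def sat [DecidableEq V] (σ : Assg V D) : DC V D → Prop
  | .ex x φ => ∃ d : D, sat (Function.update σ x (some d)) φ
  | .conj ls => ∀ l ∈ ls, satL σ l

open Classical in
/-- Restriction of an assignment to a set of variables. -/
noncomputable def restrict (σ : Assg V D) (X : Set V) : Assg V D :=
  fun x => if x ∈ X then σ x else none

/-- Substitution in terms. -/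
def substT [DecidableEq V] (x : V) (t : DTerm V D) : DTerm V D → DTerm V D
  | .var y => if y = x then t else .var y
  | .const d => .const d
  | .app f ts => .app f (ts.attach.map (fun s => substT x t s.1))
decreasing_by simp only [DTerm.app.sizeOf_spec]; have := List.sizeOf_lt_of_mem s.2; omega

def substA [DecidableEq V] (x : V) (t : DTerm V D) : Atom V D → Atom V D
  | .bot => .bot
  | .top => .top
  | .eq t1 t2 => .eq (substT x t t1) (substT x t t2)
  | .rel R ts => .rel R (ts.map (substT x t))

def substL [DecidableEq V] (x : V) (t : DTerm V D) : Lit V D → Lit V D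
  | .pos a => .pos (substA x t a)
  | .neg a => .neg (substA x t a)

/-- Capture-free substitution in data constraints (skipping under a binder of the same name). -/
def substDC [DecidableEq V] (x : V) (t : DTerm V D) : DC V D → DC V D
  | .ex y φ => if y = x then .ex y φ else .ex y (substDC x t φ)
  | .conj ls => .conj (ls.map (substL x t))

/-- Determinants of a variable in an atom. -/
def detA [DecidableEq V] (x : V) : Atom V D → List (DTerm V D)
  | .eq t1 t2 =>
      (match t1 with
        | .var y => if y = x ∧ x ∉ varsT t2 then [t2] else []
        | _ => []) ++
      (match t2 with
        | .var y => if y = x ∧ x ∉ varsT t1 then [t1] else []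
        | _ => [])
  | _ => []

def detL [DecidableEq V] (x : V) : Lit V D → List (DTerm V D)
  | .pos a => detA x a
  | .neg _ => []

/-- Determinants of a variable in a data constraint. -/
def detDC [DecidableEq V] (x : V) : DC V D → List (DTerm V D)
  | .ex y φ => if y = x then [] else detDC x φ
  | .conj ls => ls.flatMap (detL x)

/-- Syntactic existential quantification: substitute the least determinant if one exists. -/
def exFun [DecidableEq V] (x : V) (φ : DC V D) : DC V D :=
  match detDC x φ with
  | [] => .ex x φ
  | t :: _ => substDC x t φ

/-- Constraint automata over states `Q`, variables `V` (ports and pre/post memory variables)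
and data `D`. -/
structure CA (Q V D : Type) where
  states : Set Q
  Pall : Set V
  Pin : Set V
  Pout : Set V
  preM : Set V
  postM : Set V
  trans : Set (Q × Set V × DC V D × Q)
  init : Q

/-- Data constraints occurring on transitions. -/
def CA.dcs (A : CA Q V D) : Set (DC V D) :=
  {φ | ∃ q P q', (q, P, φ, q') ∈ A.trans}

/-- Hide a port: remove it from the port sets and existentially quantify it in data constraints. -/
def CA.hide (A : CA Q V D) (p : V) : CA Q V D :=
  { A with
    Pall := A.Pall \ {p}, Pin := A.Pin \ {p}, Pout := A.Pout \ {p},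
    trans := (fun tr => (tr.1, tr.2.1 \ {p}, DC.ex p tr.2.2.1, tr.2.2.2)) '' A.trans }

/-- Eliminate a port: remove it from the port sets and apply syntactic existential
quantification to data constraints. -/
def CA.elim [DecidableEq V] (A : CA Q V D) (p : V) : CA Q V D :=
  { A with
    Pall := A.Pall \ {p}, Pin := A.Pin \ {p}, Pout := A.Pout \ {p},
    trans := (fun tr => (tr.1, tr.2.1 \ {p}, exFun p tr.2.2.1, tr.2.2.2)) '' A.trans }

open Classical in
/-- Substitute a data constraint `φ'` for every occurrence of `φ` on transitions. -/
noncomputable def CA.substCA (A : CA Q V D) (φ φ' : DC V D) : CA Q V D :=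
  { A with
    trans := (fun tr => (tr.1, tr.2.1, if tr.2.2.1 = φ then φ' else tr.2.2.1, tr.2.2.2)) '' A.trans }

/-- Data commands. -/
inductive Cmd (V D : Type) where
  | skip : Cmd V D
  | nil : Cmd V D                       -- the empty command ε
  | assign : V → DTerm V D → Cmd V D
  | guard : DC V D → Cmd V D → Cmd V D  -- failure statement φ → π
  | seq : Cmd V D → Cmd V D → Cmd V D

/-- Small-step semantics on configurations; the state `none` is the fail state. -/
inductive Step [DecidableEq V] :
    Cmd V D × Option (Assg V D) → Cmd V D × Option (Assg V D) → Prop where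
  | skip {σ : Assg V D} : Step (.skip, some σ) (.nil, some σ)
  | assign {x t} {σ : Assg V D} :
      Step (.assign x t, some σ) (.nil, some (Function.update σ x (evalT σ t)))
  | guardT {φ π} {σ : Assg V D} : sat σ φ → Step (.guard φ π, some σ) (π, some σ)
  | guardF {φ π} {σ : Assg V D} : ¬ sat σ φ → Step (.guard φ π, some σ) (.nil, none)
  | seqStep {π π' π''} {σ σ' : Assg V D} :
      Step (π, some σ) (π', some σ') → π' ≠ .nil →
      Step (.seq π π'', some σ) (.seq π' π'', some σ')
  | seqDone {π π''} {σ σ' : Assg V D} :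
      Step (π, some σ) (.nil, some σ') → Step (.seq π π'', some σ) (π'', some σ')
  | seqFail {π π' π''} {σ : Assg V D} :
      Step (π, some σ) (π', none) → Step (.seq π π'', some σ) (.nil, none)

/-- Reflexive-transitive closure of the small-step semantics. -/
def Steps [DecidableEq V] :
    Cmd V D × Option (Assg V D) → Cmd V D × Option (Assg V D) → Prop :=
  Relation.ReflTransGen Step

/-- Partial-correctness semantics: successfully reachable final states. -/
def final [DecidableEq V] (π : Cmd V D) (S : Set (Assg V D)) : Set (Assg V D) :=
  {σ' | ∃ σ ∈ S, Steps (π, some σ) (.nil, some σ')}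

/-- Total-correctness semantics: additionally contains `none` (fail) if some execution fails. -/
def finalFail [DecidableEq V] (π : Cmd V D) (S : Set (Assg V D)) : Set (Option (Assg V D)) :=
  (some '' final π S) ∪
    {ς | ς = none ∧ ∃ σ ∈ S, ∃ π', Steps (π, some σ) (π', none)}

/-- Partial-correctness Hoare proof system (assertions as sets of assignments). -/
inductive HoareP [DecidableEq V] : Set (Assg V D) → Cmd V D → Set (Assg V D) → Prop where
  | skip {P} : HoareP P .skip P
  | assign {P : Set (Assg V D)} {x t} :
      HoareP {σ | Function.update σ x (evalT σ t) ∈ P} (.assign x t) P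
  | seq {P1 Pm P2 π1 π2} : HoareP P1 π1 Pm → HoareP Pm π2 P2 → HoareP P1 (.seq π1 π2) P2
  | cons {P1 P1' P2 P2' π} : HoareP P1' π P2' → P1 ⊆ P1' → P2' ⊆ P2 → HoareP P1 π P2
  | guard {P P' φ π} : HoareP (P ∩ {σ | sat σ φ}) π P' → HoareP P (.guard φ π) P'

/-- Total-correctness Hoare proof system. -/
inductive HoareT [DecidableEq V] : Set (Assg V D) → Cmd V D → Set (Assg V D) → Prop where
  | skip {P} : HoareT P .skip P
  | assign {P : Set (Assg V D)} {x t} :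
      HoareT {σ | Function.update σ x (evalT σ t) ∈ P} (.assign x t) P
  | seq {P1 Pm P2 π1 π2} : HoareT P1 π1 Pm → HoareT Pm π2 P2 → HoareT P1 (.seq π1 π2) P2
  | cons {P1 P1' P2 P2' π} : HoareT P1' π P2' → P1 ⊆ P1' → P2' ⊆ P2 → HoareT P1 π P2
  | guard {P P' φ π} :
      HoareT P π P' → P ⊆ {σ | sat σ φ} → HoareT P (.guard φ π) P'
  | decomp {P P1 P2 π} : HoareP P π P1 → HoareT P π P2 → HoareT P π (P1 ∩ P2)

/-- The literal `x ≐ t`. -/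
def eqLit (x : V) (t : DTerm V D) : Lit V D := .pos (.eq (.var x) t)

/-- A single-literal data constraint. -/
def litDC (l : Lit V D) : DC V D := .conj [l]

open Classical in
/-- Translation of the ordered equalities: assignment if the variable is fresh,
failure statement otherwise. -/
noncomputable def commEqs [DecidableEq V] (X : Set V) :
    List V → List (V × DTerm V D) → Cmd V D
  | _, [] => .skip
  | done, (x, t) :: rest =>
      .seq (if x ∈ X ∨ x ∈ done then .guard (litDC (eqLit x t)) .skip else .assign x t)
           (commEqs X (x :: done) rest)

/-- Translation of remaining literals into failure statements. -/
def commRest : List (Lit V D) → Cmd V D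
  | [] => .skip
  | l :: rest => .seq (.guard (litDC l) .skip) (commRest rest)

/-- Commandification: output of Algorithm 1 on the linearized literals. -/
noncomputable def commandify [DecidableEq V] (X : Set V)
    (eqs : List (V × DTerm V D)) (rest : List (Lit V D)) : Cmd V D :=
  .seq (commEqs X [] eqs) (commRest rest)

/-- The full literal list `ℓ1, …, ℓ_{n+m}` of a commandification problem. -/
def commLits (eqs : List (V × DTerm V D)) (rest : List (Lit V D)) : List (Lit V D) :=
  eqs.map (fun p => eqLit p.1 p.2) ++ rest

/-- Requirements of the commandification algorithm: the first `n` literals are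
equalities `x_i ≐ t_i` linearized so that all dependencies of each `t_i` are either
uncontrollable (in `X`) or assigned earlier, and every variable outside `X` occurs
among `x_1, …, x_n`. -/
def CommReq [DecidableEq V] (X : Set V)
    (eqs : List (V × DTerm V D)) (rest : List (Lit V D)) : Prop :=
  (∀ l ∈ commLits eqs rest, ∀ y ∈ varsL l, y ∈ X ∨ y ∈ eqs.map Prod.fst) ∧
  (∀ i (h : i < eqs.length), ∀ y ∈ varsT (eqs.get ⟨i, h⟩).2,
      y ∈ X ∨ y ∈ (eqs.take i).map Prod.fst)

/-- B-graphs: hypergraphs whose b-arcs have a set of tails and one head. -/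
structure BGraph (V : Type) where
  arcs : Set (Set V × V)

/-- The single-tailed arc relation obtained by splitting b-arcs. -/
def BGraph.rel (G : BGraph V) (a b : V) : Prop := ∃ T, (T, b) ∈ G.arcs ∧ a ∈ T

/-- Layers of the greedy exploration from the root. -/
def BGraph.layer (G : BGraph V) (root : V) : ℕ → Set V
  | 0 => {root}
  | n + 1 => G.layer root n ∪ {v | ∃ T, (T, v) ∈ G.arcs ∧ T ⊆ G.layer root n}

/-- Relation induced by a choice of one incoming b-arc per vertex. -/
def chosenRel (choice : V → Option (Set V)) (a b : V) : Prop :=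
  ∃ T, choice b = some T ∧ a ∈ T

/-- A ⋆-arborescence: one incoming b-arc per non-root vertex, acyclically. -/
def IsArbor (G : BGraph V) (root : V) (choice : V → Option (Set V)) : Prop :=
  choice root = none ∧
  (∀ v, v ≠ root → ∃ T, choice v = some T ∧ (T, v) ∈ G.arcs) ∧
  (∀ v, ¬ Relation.TransGen (chosenRel choice) v v)

/-- The data relation encoding a data command `π` run from initial states over `X`,
recording the values of the variables `xs`. -/
def cmdRel [DecidableEq V] (π : Cmd V D) (X : Set V) (xs : List V) (ds : List D) : Prop :=
  ∃ σ0 σ : Assg V D, (∀ x ∈ X, (σ0 x).isSome) ∧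
    Steps (π, some σ0) (.nil, some σ) ∧ xs.map σ = ds.map some

open Classical in
/-- `commfun`: encode the commandification of `φ` as a data relation applied to the
ordered free variables of `φ`, when the B-graph of `φ` over `X` has a ⋆-arborescence
and `X ⊆ free(φ)`; otherwise leave `φ` unchanged.  The algorithm producing the data
command and the arborescence test are parameters `alg` and `hasArb`. -/
noncomputable def commfun [LinearOrder V] (alg : DC V D → Set V → Cmd V D)
    (hasArb : DC V D → Set V → Prop) (φ : DC V D) (X : Set V) : DC V D :=
  let xs := (freeDC φ).toFinset.sort (· ≤ ·)
  if hasArb φ X ∧ X ⊆ {x | x ∈ freeDC φ} then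
    .conj [.pos (.rel (fun ds => cmdRel (alg φ X) X xs ds) (xs.map .var))]
  else φ

/-- The uncontrollable variables of a data constraint in an automaton. -/
def CA.uncontr [DecidableEq V] (A : CA Q V D) (φ : DC V D) : Set V :=
  {x | x ∈ freeDC φ} ∩ (A.Pin ∪ A.preM)

/-- Commandify an automaton. -/
noncomputable def CA.comm [LinearOrder V] (A : CA Q V D)
    (alg : DC V D → Set V → Cmd V D) (hasArb : DC V D → Set V → Prop) : CA Q V D :=
  { A with
    trans := (fun tr =>
      (tr.1, tr.2.1, commfun alg hasArb tr.2.2.1 (A.uncontr tr.2.2.1), tr.2.2.2)) '' A.trans }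

section AuxProofs

variable {V D : Type}

theorem myMapM_map {α β γ : Type} (l : List α) (g : α → β) (f : β → Option γ) :
    (l.map g).mapM f = l.mapM (fun a => f (g a)) := by
  induction l with
  | nil => rfl
  | cons a as ih => rw [List.map_cons, List.mapM_cons, List.mapM_cons, ih]

theorem myMapM_attach {α β : Type} (l : List α) (f : α → Option β) :
    l.attach.mapM (fun x => f x.1) = l.mapM f := by
  have h := myMapM_map l.attach (Subtype.val) f
  rw [List.attach_map_subtype_val] at h
  exact h.symm

theorem myMapM_congr {α β : Type} {l : List α} {f g : α → Option β}
    (h : ∀ a ∈ l, f a = g a) : l.mapM f = l.mapM g := by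
  induction l with
  | nil => rfl
  | cons a as ih =>
    rw [List.mapM_cons, List.mapM_cons, h a (by simp),
      ih (fun a ha => h a (by simp [ha]))]

theorem myMapM_isSome {α β : Type} (l : List α) (f : α → Option β) :
    (l.mapM f).isSome ↔ ∀ a ∈ l, (f a).isSome := by
  induction l with
  | nil => rw [List.mapM_nil]; simp
  | cons a as ih =>
    rw [List.mapM_cons]
    cases hfa : f a <;> cases has : as.mapM f <;> simp_all

theorem evalT_app (σ : Assg V D) (f : List D → D) (ts : List (DTerm V D)) :
    evalT σ (.app f ts) = (ts.mapM (evalT σ)).map f := by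
  rw [evalT, myMapM_attach]

theorem varsT_app (f : List D → D) (ts : List (DTerm V D)) :
    varsT (.app f ts) = ts.flatMap varsT := by
  rw [varsT, List.flatMap_def, List.flatMap_def, List.attach_map_val]

theorem substT_app [DecidableEq V] (x : V) (t : DTerm V D)
    (f : List D → D) (ts : List (DTerm V D)) :
    substT x t (.app f ts) = .app f (ts.map (substT x t)) := by
  rw [substT]
  congr 1
  exact List.attach_map_val (l := ts) (f := substT x t)

theorem evalT_congr (σ σ' : Assg V D) (s : DTerm V D)
    (h : ∀ y ∈ varsT s, σ y = σ' y) : evalT σ s = evalT σ' s := by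
  match s with
  | .var y => simpa [evalT] using h y (by simp [varsT])
  | .const d => simp [evalT]
  | .app f ts =>
    rw [evalT_app, evalT_app]
    congr 1
    apply myMapM_congr
    intro a ha
    exact evalT_congr σ σ' a (fun y hy => h y (by
      rw [varsT_app]; exact List.mem_flatMap.mpr ⟨a, ha, hy⟩))
termination_by sizeOf s
decreasing_by simp only [DTerm.app.sizeOf_spec]; have := List.sizeOf_lt_of_mem ha; omega

theorem evalT_isSome (σ : Assg V D) (s : DTerm V D) :
    (evalT σ s).isSome ↔ ∀ y ∈ varsT s, (σ y).isSome := by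
  match s with
  | .var y => simp [evalT, varsT]
  | .const d => simp [evalT, varsT]
  | .app f ts =>
    rw [evalT_app, varsT_app]
    rw [Option.isSome_map]
    rw [myMapM_isSome]
    constructor
    · intro h y hy
      rcases List.mem_flatMap.mp hy with ⟨a, ha, hya⟩
      exact (evalT_isSome σ a).mp (h a ha) y hya
    · intro h a ha
      exact (evalT_isSome σ a).mpr (fun y hy => h y (List.mem_flatMap.mpr ⟨a, ha, hy⟩))
termination_by sizeOf s
decreasing_by
  all_goals simp only [DTerm.app.sizeOf_spec]
  · have := List.sizeOf_lt_of_mem ha; omega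
  · have := List.sizeOf_lt_of_mem ha; omega

theorem evalT_substT [DecidableEq V] (σ : Assg V D) (x : V) (t s : DTerm V D) :
    evalT σ (substT x t s) = evalT (Function.update σ x (evalT σ t)) s := by
  match s with
  | .var y =>
    by_cases h : y = x <;> simp [substT, h, evalT, Function.update]
  | .const d => simp [substT, evalT]
  | .app f ts =>
    rw [substT_app, evalT_app, evalT_app, myMapM_map]
    apply congrArg
    apply myMapM_congr
    intro a ha
    exact evalT_substT σ x t a
termination_by sizeOf s
decreasing_by simp only [DTerm.app.sizeOf_spec]; have := List.sizeOf_lt_of_mem ha; omega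

theorem mem_varsT_substT [DecidableEq V] (x : V) (t : DTerm V D) (s : DTerm V D) (y : V) :
    y ∈ varsT (substT x t s) ↔ (y ∈ varsT s ∧ y ≠ x) ∨ (x ∈ varsT s ∧ y ∈ varsT t) := by
  match s with
  | .var z =>
    rw [substT]
    by_cases h : z = x
    · subst h
      rw [if_pos rfl]
      simp only [varsT, List.mem_singleton]
      constructor
      · intro hy; exact Or.inr ⟨by simp, hy⟩
      · rintro (⟨rfl, hne⟩ | ⟨_, hy⟩)
        · exact absurd rfl hne
        · exact hy
    · rw [if_neg h]
      simp only [varsT, List.mem_singleton]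
      constructor
      · rintro rfl; exact Or.inl ⟨rfl, fun hx => h hx⟩
      · rintro (⟨rfl, _⟩ | ⟨hz, _⟩)
        · rfl
        · exact absurd hz.symm h
  | .const d => simp [substT, varsT]
  | .app f ts =>
    rw [substT_app, varsT_app, varsT_app, List.flatMap_map]
    simp only [List.mem_flatMap]
    constructor
    · rintro ⟨a, ha, hy⟩
      rcases (mem_varsT_substT x t a y).mp hy with ⟨h1, h2⟩ | ⟨h1, h2⟩
      · exact Or.inl ⟨⟨a, ha, h1⟩, h2⟩
      · exact Or.inr ⟨⟨a, ha, h1⟩, h2⟩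
    · rintro (⟨⟨a, ha, h1⟩, h2⟩ | ⟨⟨a, ha, h1⟩, h2⟩)
      · exact ⟨a, ha, (mem_varsT_substT x t a y).mpr (Or.inl ⟨h1, h2⟩)⟩
      · exact ⟨a, ha, (mem_varsT_substT x t a y).mpr (Or.inr ⟨h1, h2⟩)⟩
termination_by sizeOf s
decreasing_by
  all_goals simp only [DTerm.app.sizeOf_spec]
  all_goals (have := List.sizeOf_lt_of_mem ha; omega)

theorem mem_varsA_substA [DecidableEq V] (x : V) (t : DTerm V D) (a : Atom V D) (y : V) :
    y ∈ varsA (substA x t a) ↔ (y ∈ varsA a ∧ y ≠ x) ∨ (x ∈ varsA a ∧ y ∈ varsT t) := by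
  cases a with
  | bot => simp [substA, varsA]
  | top => simp [substA, varsA]
  | eq t1 t2 =>
    simp only [substA, varsA, List.mem_append, mem_varsT_substT]
    tauto
  | rel R ts =>
    simp only [substA, varsA, List.flatMap_map, List.mem_flatMap, mem_varsT_substT]
    constructor
    · rintro ⟨a, ha, (⟨h1, h2⟩ | ⟨h1, h2⟩)⟩
      · exact Or.inl ⟨⟨a, ha, h1⟩, h2⟩
      · exact Or.inr ⟨⟨a, ha, h1⟩, h2⟩
    · rintro (⟨⟨a, ha, h1⟩, h2⟩ | ⟨⟨a, ha, h1⟩, h2⟩)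
      · exact ⟨a, ha, Or.inl ⟨h1, h2⟩⟩
      · exact ⟨a, ha, Or.inr ⟨h1, h2⟩⟩

theorem satA_substA [DecidableEq V] (σ : Assg V D) (x : V) (t : DTerm V D) (a : Atom V D) :
    satA σ (substA x t a) ↔ satA (Function.update σ x (evalT σ t)) a := by
  cases a with
  | bot => simp [substA, satA]
  | top => simp [substA, satA]
  | eq t1 t2 => simp [substA, satA, evalT_substT]
  | rel R ts =>
    simp only [substA, satA]
    rw [myMapM_map, myMapM_congr (fun a _ => evalT_substT σ x t a)]

theorem isSome_vars_substA [DecidableEq V] (σ : Assg V D) (x : V) (t : DTerm V D)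
    (hxt : x ∉ varsT t) (a : Atom V D) :
    (∀ y ∈ varsA (substA x t a), (σ y).isSome) ↔
    (∀ y ∈ varsA a, ((Function.update σ x (evalT σ t)) y).isSome) := by
  constructor
  · intro h y hy
    by_cases hyx : y = x
    · rw [hyx, Function.update_self, evalT_isSome]
      intro z hz
      exact h z ((mem_varsA_substA x t a z).mpr (Or.inr ⟨hyx ▸ hy, hz⟩))
    · rw [Function.update_of_ne hyx]
      exact h y ((mem_varsA_substA x t a y).mpr (Or.inl ⟨hy, hyx⟩))
  · intro h y hy
    rcases (mem_varsA_substA x t a y).mp hy with ⟨h1, h2⟩ | ⟨h1, h2⟩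
    · have := h y h1
      rwa [Function.update_of_ne h2] at this
    · have := h x h1
      rw [Function.update_self, evalT_isSome] at this
      exact this y h2

theorem satL_substL [DecidableEq V] (σ : Assg V D) (x : V) (t : DTerm V D)
    (hxt : x ∉ varsT t) (l : Lit V D) :
    satL σ (substL x t l) ↔ satL (Function.update σ x (evalT σ t)) l := by
  cases l with
  | pos a => simp only [substL, satL]; exact satA_substA σ x t a
  | neg a =>
    simp only [substL, satL]
    rw [satA_substA, isSome_vars_substA σ x t hxt]

theorem mem_detA [DecidableEq V] {x : V} {t : DTerm V D} {a : Atom V D}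
    (h : t ∈ detA x a) :
    x ∉ varsT t ∧ (a = .eq (.var x) t ∨ a = .eq t (.var x)) := by
  cases a with
  | bot => simp [detA] at h
  | top => simp [detA] at h
  | rel R ts => simp [detA] at h
  | eq t1 t2 =>
    have h' : t ∈ (match t1 with
        | .var y => if y = x ∧ x ∉ varsT t2 then [t2] else []
        | _ => ([] : List (DTerm V D))) ++ (match t2 with
        | .var y => if y = x ∧ x ∉ varsT t1 then [t1] else []
        | _ => ([] : List (DTerm V D))) := h
    rw [List.mem_append] at h'
    rcases h' with h' | h'
    · split at h'
      · split at h'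
        · rename_i y heq hcond
          rw [List.mem_singleton] at h'
          subst h'
          exact ⟨hcond.2, Or.inl (by rw [hcond.1])⟩
        · simp at h'
      · simp at h'
    · split at h'
      · split at h'
        · rename_i y heq hcond
          rw [List.mem_singleton] at h'
          subst h'
          exact ⟨hcond.2, Or.inr (by rw [hcond.1])⟩
        · simp at h'
      · simp at h'

theorem mem_detL [DecidableEq V] {x : V} {t : DTerm V D} {l : Lit V D}
    (h : t ∈ detL x l) :
    x ∉ varsT t ∧ (l = .pos (.eq (.var x) t) ∨ l = .pos (.eq t (.var x))) := by
  cases l with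
  | pos a =>
    rcases mem_detA (h : t ∈ detA x a) with ⟨h1, h2 | h2⟩
    · exact ⟨h1, Or.inl (by rw [h2])⟩
    · exact ⟨h1, Or.inr (by rw [h2])⟩
  | neg a => simp [detL] at h

/-- Key lemma at the level of conjunctions of literals. -/
theorem conj_det_equiv [DecidableEq V] (σ : Assg V D) (x : V) (t : DTerm V D)
    (ls : List (Lit V D)) (hxt : x ∉ varsT t)
    (hdet : (.pos (.eq (.var x) t) ∈ ls) ∨ (.pos (.eq t (.var x)) ∈ ls)) :
    sat σ (.ex x (.conj ls)) ↔ sat σ (substDC x t (.conj ls)) := by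
  simp only [sat, substDC, List.mem_map]
  constructor
  · rintro ⟨d, hd⟩
    have hevt : evalT σ t = some d := by
      have hsatdet : satA (Function.update σ x (some d)) (.eq (.var x) t) := by
        rcases hdet with hmem | hmem
        · exact hd _ hmem
        · rcases hd _ hmem with ⟨e, h1, h2⟩
          exact ⟨e, h2, h1⟩
      rcases hsatdet with ⟨e, h1, h2⟩
      have : e = d := by
        simp [evalT, Function.update_self] at h1
        exact h1.symm
      subst this
      rw [← h2]
      apply evalT_congr
      intro y hy
      rw [Function.update_of_ne (fun hyx => hxt (by rw [← hyx]; exact hy))]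
    intro l' hl'
    rcases hl' with ⟨l, hl, rfl⟩
    rw [satL_substL σ x t hxt, hevt]
    exact hd l hl
  · intro h
    have hall : ∀ l ∈ ls, satL (Function.update σ x (evalT σ t)) l := by
      intro l hl
      rw [← satL_substL σ x t hxt]
      exact h _ ⟨l, hl, rfl⟩
    have hsatdet : satA (Function.update σ x (evalT σ t)) (.eq (.var x) t) := by
      rcases hdet with hmem | hmem
      · exact hall _ hmem
      · rcases hall _ hmem with ⟨e, h1, h2⟩
        exact ⟨e, h2, h1⟩
    rcases hsatdet with ⟨e, h1, _⟩
    have hevt : evalT σ t = some e := by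
      simpa [evalT, Function.update_self] using h1
    refine ⟨e, ?_⟩
    rw [← hevt]
    intro l hl
    exact hall l hl

theorem mem_detDC_equiv [DecidableEq V] (x : V) (φ : DC V D) (t : DTerm V D)
    (ht : t ∈ detDC x φ) :
    ∀ σ : Assg V D, sat σ (.ex x φ) ↔ sat σ (substDC x t φ) := by
  induction φ with
  | ex y ψ ih =>
    intro σ
    rw [detDC] at ht
    by_cases hyx : y = x
    · simp [hyx] at ht
    · rw [if_neg hyx] at ht
      rw [substDC, if_neg hyx]
      have hswap : ∀ (d d' : Option D) (τ : Assg V D),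
          Function.update (Function.update τ x d) y d'
            = Function.update (Function.update τ y d') x d :=
        fun d d' τ => Function.update_comm (fun h => hyx h.symm) d d' τ
      constructor
      · rintro ⟨d, d', hdd'⟩
        rw [hswap] at hdd'
        exact ⟨d', ((ih ht _).mp ⟨d, hdd'⟩ : _)⟩
      · rintro ⟨d', hd'⟩
        rcases (ih ht _).mpr hd' with ⟨d, hd⟩
        exact ⟨d, d', by rw [hswap]; exact hd⟩
  | conj ls =>
    intro σ
    rw [detDC, List.mem_flatMap] at ht
    rcases ht with ⟨l, hl, htl⟩
    rcases mem_detL htl with ⟨hxt, hcase | hcase⟩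
    · exact conj_det_equiv σ x t ls hxt (Or.inl (hcase ▸ hl))
    · exact conj_det_equiv σ x t ls hxt (Or.inr (hcase ▸ hl))

end AuxProofs

/-- ∃x.φ is logically equivalent to the syntactic existential
quantification ∃fun_x(φ). -/
theorem ex_equiv_exFun {V D : Type} [DecidableEq V] (x : V) (φ : DC V D) :
    ∀ σ : Assg V D, sat σ (.ex x φ) ↔ sat σ (exFun x φ) := by
  intro σ
  rw [exFun]
  rcases hdet : detDC x φ with _ | ⟨t, rest⟩
  · rfl
  · exact mem_detDC_equiv x φ t (by rw [hdet]; simp) σ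
end

section
/- Eliminating an ever-determined port removes it from all data constraints: if p is an ever-determined port of a constraint automaton A (i.e., for every data constraint φ occurring on a transition of A, if p occurs in φ then p has a determinant in φ), then p does not occur in any data constraint of A ⊘ p. -/
theorem varsT_substT [DecidableEq V] {p : V} {t : DTerm V D} (ht : p ∉ varsT t) :
    ∀ s : DTerm V D, p ∉ varsT (substT p t s)
  | .var y => by
      simp only [substT]
      split
      · exact ht
      · simp only [varsT]; rename_i h; simp [Ne.symm h]
  | .const d => by simp [substT, varsT]
  | .app f ts => by
      simp only [substT, varsT, List.mem_flatMap, List.mem_attach, true_and,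
        Subtype.exists, List.mem_map]
      rintro ⟨s, ⟨⟨u, hu, rfl⟩, hmem⟩⟩
      exact varsT_substT ht u hmem
decreasing_by simp only [DTerm.app.sizeOf_spec]; have := List.sizeOf_lt_of_mem hu; omega

theorem varsA_substA [DecidableEq V] {p : V} {t : DTerm V D} (ht : p ∉ varsT t)
    (a : Atom V D) : p ∉ varsA (substA p t a) := by
  cases a with
  | bot => simp [substA, varsA]
  | top => simp [substA, varsA]
  | eq t1 t2 =>
      simp only [substA, varsA, List.mem_append]
      rintro (h | h)
      · exact varsT_substT ht t1 h
      · exact varsT_substT ht t2 h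
  | rel R ts =>
      simp only [substA, varsA, List.mem_flatMap, List.mem_map]
      rintro ⟨s, ⟨u, hu, rfl⟩, hmem⟩
      exact varsT_substT ht u hmem

theorem varsL_substL [DecidableEq V] {p : V} {t : DTerm V D} (ht : p ∉ varsT t)
    (l : Lit V D) : p ∉ varsL (substL p t l) := by
  cases l <;> simpa [substL, varsL] using varsA_substA ht _

theorem detA_not_mem [DecidableEq V] {p : V} {t : DTerm V D} {a : Atom V D}
    (h : t ∈ detA p a) : p ∉ varsT t := by
  cases a with
  | bot => simp [detA] at h
  | top => simp [detA] at h
  | rel R ts => simp [detA] at h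
  | eq t1 t2 =>
      simp only [detA, List.mem_append] at h
      rcases h with h | h
      · cases t1 <;> simp only at h
        · split at h
          · rename_i hc; simp at h; subst h; exact hc.2
          · simp at h
        all_goals simp at h
      · cases t2 <;> simp only at h
        · split at h
          · rename_i hc; simp at h; subst h; exact hc.2
          · simp at h
        all_goals simp at h

theorem detDC_not_mem [DecidableEq V] {p : V} {t : DTerm V D} :
    ∀ {φ : DC V D}, t ∈ detDC p φ → p ∉ varsT t
  | .ex y φ, h => by
      simp only [detDC] at h
      split at h
      · simp at h
      · exact detDC_not_mem h
  | .conj ls, h => by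
      simp only [detDC, List.mem_flatMap] at h
      rcases h with ⟨l, _, hl⟩
      cases l with
      | pos a => exact detA_not_mem hl
      | neg a => simp [detL] at hl

theorem substDC_not_mem [DecidableEq V] {p : V} {t : DTerm V D} (ht : p ∉ varsT t) :
    ∀ {φ : DC V D}, detDC p φ ≠ [] → p ∉ varsDC (substDC p t φ)
  | .ex y φ, hd => by
      simp only [detDC] at hd
      split at hd
      · exact absurd rfl hd
      · rename_i hy
        simp only [substDC, if_neg hy, varsDC]
        exact substDC_not_mem ht hd
  | .conj ls, _ => by
      simp only [substDC, varsDC, List.mem_flatMap, List.mem_map]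
      rintro ⟨l, ⟨u, _, rfl⟩, hmem⟩
      exact varsL_substL ht u hmem

/-- eliminating an ever-determined port removes it from all data
constraints of the automaton. -/
theorem elim_everDetermined {Q V D : Type} [DecidableEq V] (A : CA Q V D) (p : V)
    (hed : ∀ φ ∈ A.dcs, p ∈ varsDC φ → detDC p φ ≠ []) :
    ∀ φ ∈ (A.elim p).dcs, p ∉ varsDC φ := by
  rintro ψ ⟨q, P, q', htr⟩
  rcases htr with ⟨tr0, htr0, heq⟩
  set φ0 := tr0.2.2.1 with hφ0def
  have hφ0 : φ0 ∈ A.dcs := ⟨tr0.1, tr0.2.1, tr0.2.2.2, htr0⟩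
  have hψ : ψ = exFun p φ0 := by
    have := congrArg (fun x : Q × Set V × DC V D × Q => x.2.2.1) heq
    simpa using this.symm
  subst hψ
  unfold exFun
  rcases hdet : detDC p φ0 with _ | ⟨t, rest⟩
  · intro hv
    simp only [varsDC] at hv
    exact hed φ0 hφ0 hv hdet
  · have htmem : t ∈ detDC p φ0 := by rw [hdet]; exact List.mem_cons_self
    exact substDC_not_mem (detDC_not_mem htmem) (by rw [hdet]; simp)
end

section
/- Soundness of the partial-correctness Hoare proof system for data commands: if a triple {φ} π {φ'} is derivable in the proof system (with rules for skip, assignment, sequential composition, consequence, and the failure-statement rule deriving {φ} (ℓ → π) {φ'} from {φ ∧ ℓ} π {φ'}), then it is valid in the partial-correctness sense: every successful execution of π from a state satisfying φ ends in a state satisfying φ'. -/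
section Soundness

variable {V D : Type} [DecidableEq V]

lemma no_step_none {π : Cmd V D} {c} (h : Step (π, (none : Option (Assg V D))) c) : False := by
  cases h

lemma steps_none {π : Cmd V D} {π' σ'}
    (h : Steps (π, (none : Option (Assg V D))) (π', some σ')) : False := by
  rcases (Relation.ReflTransGen.cases_head h) with h | ⟨c, hs, _⟩
  · simp at h
  · exact no_step_none hs

lemma steps_nil {π' : Cmd V D} {σ : Assg V D} {σ'}
    (h : Steps (.nil, some σ) (π', σ')) : π' = .nil ∧ σ' = some σ := by
  rcases (Relation.ReflTransGen.cases_head h) with h | ⟨c, hs, _⟩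
  · exact ⟨congrArg Prod.fst h.symm, congrArg Prod.snd h.symm⟩
  · cases hs

lemma steps_skip {σ σ' : Assg V D}
    (h : Steps (.skip, some σ) (.nil, some σ')) : σ' = σ := by
  rcases (Relation.ReflTransGen.cases_head h) with h | ⟨c, hs, hrest⟩
  · simp at h
  · cases hs
    have := steps_nil hrest
    simpa using this.2

lemma steps_assign {x t} {σ σ' : Assg V D}
    (h : Steps (.assign x t, some σ) (.nil, some σ')) :
    σ' = Function.update σ x (evalT σ t) := by
  rcases (Relation.ReflTransGen.cases_head h) with h | ⟨c, hs, hrest⟩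
  · simp at h
  · cases hs
    have := steps_nil hrest
    simpa using this.2

lemma steps_guard {φ} {π : Cmd V D} {σ σ' : Assg V D}
    (h : Steps (.guard φ π, some σ) (.nil, some σ')) :
    sat σ φ ∧ Steps (π, some σ) (.nil, some σ') := by
  rcases (Relation.ReflTransGen.cases_head h) with h | ⟨c, hs, hrest⟩
  · simp at h
  · cases hs with
    | guardT hφ => exact ⟨hφ, hrest⟩
    | guardF hφ => exact absurd hrest (fun h => steps_none h)

lemma steps_seq {π1 π2 : Cmd V D} {σ σ' : Assg V D}
    (h : Steps (.seq π1 π2, some σ) (.nil, some σ')) :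
    ∃ σm, Steps (π1, some σ) (.nil, some σm) ∧ Steps (π2, some σm) (.nil, some σ') := by
  generalize hc : ((Cmd.seq π1 π2 : Cmd V D), (some σ : Option (Assg V D))) = c at h
  induction h using Relation.ReflTransGen.head_induction_on generalizing π1 σ with
  | refl => simp at hc
  | head hs hrest ih =>
    cases hc
    cases hs with
    | seqStep hstep hne =>
      obtain ⟨σm, h1, h2⟩ := ih rfl
      exact ⟨σm, Relation.ReflTransGen.head hstep h1, h2⟩
    | seqDone hstep =>
      exact ⟨_, Relation.ReflTransGen.single hstep, hrest⟩
    | seqFail hstep =>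
      exact absurd hrest (fun h => steps_none h)

end Soundness

/-- soundness of the partial-correctness Hoare proof system: a derivable
triple {P} π {P'} is valid: every successful execution of π from a state in P ends
in a state in P'. -/
theorem hoareP_sound {V D : Type} [DecidableEq V]
    (P P' : Set (Assg V D)) (π : Cmd V D) (h : HoareP P π P') :
    final π P ⊆ P' := by
  induction h with
  | skip =>
    rintro σ' ⟨σ, hσ, hsteps⟩
    rwa [steps_skip hsteps]
  | assign =>
    rintro σ' ⟨σ, hσ, hsteps⟩
    rw [steps_assign hsteps]
    exact hσ
  | seq h1 h2 ih1 ih2 =>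
    rintro σ' ⟨σ, hσ, hsteps⟩
    obtain ⟨σm, hs1, hs2⟩ := steps_seq hsteps
    exact ih2 ⟨σm, ih1 ⟨σ, hσ, hs1⟩, hs2⟩
  | cons h hP1 hP2 ih =>
    rintro σ' ⟨σ, hσ, hsteps⟩
    exact hP2 (ih ⟨σ, hP1 hσ, hsteps⟩)
  | guard h ih =>
    rintro σ' ⟨σ, hσ, hsteps⟩
    obtain ⟨hφ, hs⟩ := steps_guard hsteps
    exact ih ⟨σ, ⟨hσ, hφ⟩, hs⟩
end

section
/- Completeness of commandification: under the same requirements, if σ' is any data assignment satisfying ℓ1 ∧ ⋯ ∧ ℓ_{n+m}, then the generated command π satisfies the total-correctness triple { ⋀_{x∈X} x ≐ σ'(x) } π { ⋀_{x∈X∪{x_1,...,x_n}} x ≐ σ'(x) }; in particular, execution of π starting from the restriction of σ' to X terminates successfully (never fails) and assigns every x_i the value σ'(x_i). -/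
/-! ### Auxiliary lemmas for completeness -/

theorem my_mapM_congr {α β : Type _} {f g : α → Option β} :
    ∀ {l : List α}, (∀ a ∈ l, f a = g a) → l.mapM f = l.mapM g
  | [], _ => rfl
  | a :: l, h => by
      simp only [List.mapM_cons, h a (by simp)]
      rw [my_mapM_congr (fun b hb => h b (by simp [hb]))]

theorem my_evalT_congr {V D : Type} (σ σ'' : Assg V D) :
    ∀ (t : DTerm V D), (∀ x ∈ varsT t, σ x = σ'' x) → evalT σ t = evalT σ'' t
  | .var x, h => by simpa [evalT] using h x (by simp [varsT])
  | .const _, _ => by simp [evalT]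
  | .app f ts, h => by
      rw [evalT, evalT]
      congr 1
      exact my_mapM_congr (fun s hs => my_evalT_congr σ σ'' s.1
        (fun x hx => h x (by rw [varsT]; exact List.mem_flatMap.2 ⟨s, hs, hx⟩)))
decreasing_by simp only [DTerm.app.sizeOf_spec]; have := List.sizeOf_lt_of_mem s.2; omega

theorem my_satA_congr {V D : Type} {σ σ'' : Assg V D} (a : Atom V D)
    (h : ∀ x ∈ varsA a, σ x = σ'' x) : satA σ a ↔ satA σ'' a := by
  cases a with
  | bot => exact Iff.rfl
  | top => exact Iff.rfl
  | eq t1 t2 =>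
    have h1 : evalT σ t1 = evalT σ'' t1 :=
      my_evalT_congr _ _ _ (fun x hx => h x (by simp [varsA, hx]))
    have h2 : evalT σ t2 = evalT σ'' t2 :=
      my_evalT_congr _ _ _ (fun x hx => h x (by simp [varsA, hx]))
    simp [satA, h1, h2]
  | rel R ts =>
    have hm : ts.mapM (evalT σ) = ts.mapM (evalT σ'') :=
      my_mapM_congr (fun t ht => my_evalT_congr _ _ _
        (fun x hx => h x (by rw [varsA]; exact List.mem_flatMap.2 ⟨t, ht, hx⟩)))
    simp only [satA, hm]

theorem my_satL_congr {V D : Type} {σ σ'' : Assg V D} (l : Lit V D)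
    (h : ∀ x ∈ varsL l, σ x = σ'' x) : satL σ l ↔ satL σ'' l := by
  cases l with
  | pos a => exact my_satA_congr a h
  | neg a =>
    simp only [satL]
    rw [my_satA_congr a h]
    have hs : (∀ x ∈ varsA a, (σ x).isSome) ↔ (∀ x ∈ varsA a, (σ'' x).isSome) := by
      constructor <;> intro hh x hx
      · rw [← h x hx]; exact hh x hx
      · rw [h x hx]; exact hh x hx
    rw [hs]

/-- The guard of a single literal holds in any state agreeing with a satisfying state. -/
theorem my_sat_litDC {V D : Type} [DecidableEq V] {σ σ' : Assg V D} (l : Lit V D)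
    (hl : satL σ' l) (h : ∀ x ∈ varsL l, σ x = σ' x) : sat σ (litDC l) := by
  intro l' hl'
  simp only [litDC, List.mem_singleton] at hl'
  subst hl'
  exact (my_satL_congr _ h).2 hl

theorem my_commRest_T {V D : Type} [DecidableEq V] (σ' : Assg V D) (S : Set V) :
    ∀ (rest : List (Lit V D)),
    (∀ l ∈ rest, ∀ y ∈ varsL l, y ∈ S) →
    (∀ l ∈ rest, satL σ' l) →
    HoareT {σ : Assg V D | ∀ x ∈ S, (σ x).isSome ∧ σ x = σ' x} (commRest rest)
           {σ : Assg V D | ∀ x ∈ S, (σ x).isSome ∧ σ x = σ' x}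
  | [], _, _ => HoareT.skip
  | l :: rest, hv, hs => by
      refine HoareT.seq (Pm := {σ : Assg V D | ∀ x ∈ S, (σ x).isSome ∧ σ x = σ' x})
        (HoareT.guard HoareT.skip ?_)
        (my_commRest_T σ' S rest (fun l' h' => hv l' (by simp [h']))
          (fun l' h' => hs l' (by simp [h'])))
      intro σ hσ
      exact my_sat_litDC l (hs l (by simp))
        (fun x hx => (hσ x (hv l (by simp) x hx)).2)

theorem my_commEqs_T {V D : Type} [DecidableEq V] (X : Set V) (σ' : Assg V D) :
    ∀ (eqs : List (V × DTerm V D)) (done : List V),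
    (∀ i (h : i < eqs.length), ∀ y ∈ varsT (eqs.get ⟨i, h⟩).2,
        y ∈ X ∨ y ∈ done ∨ y ∈ (eqs.take i).map Prod.fst) →
    (∀ p ∈ eqs, satL σ' (eqLit p.1 p.2)) →
    HoareT {σ : Assg V D | ∀ x, (x ∈ X ∨ x ∈ done) → (σ x).isSome ∧ σ x = σ' x}
      (commEqs X done eqs)
      {σ : Assg V D | ∀ x, (x ∈ X ∨ x ∈ done ∨ x ∈ eqs.map Prod.fst) →
        (σ x).isSome ∧ σ x = σ' x}
  | [], done, _, _ => by
      refine HoareT.cons HoareT.skip (le_refl _) ?_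
      intro σ hσ x hx
      exact hσ x (by simpa using hx)
  | (x0, t0) :: rest, done, hdep, hs => by
      have hs0 : satL σ' (eqLit x0 t0) := hs (x0, t0) (by simp)
      obtain ⟨d, hd1, hd2⟩ : ∃ d, σ' x0 = some d ∧ evalT σ' t0 = some d := by
        simpa [eqLit, satL, satA, evalT] using hs0
      have hvars0 : ∀ y ∈ varsT t0, y ∈ X ∨ y ∈ done := by
        intro y hy
        have := hdep 0 (by simp) y (by simpa using hy)
        simpa using this
      -- mid assertion
      set Pmid : Set (Assg V D) :=
        {σ : Assg V D | ∀ x, (x ∈ X ∨ x ∈ (x0 :: done)) → (σ x).isSome ∧ σ x = σ' x}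
        with hPmid
      have hIH : HoareT Pmid (commEqs X (x0 :: done) rest)
          {σ : Assg V D | ∀ x, (x ∈ X ∨ x ∈ (x0 :: done) ∨ x ∈ rest.map Prod.fst) →
            (σ x).isSome ∧ σ x = σ' x} := by
        refine my_commEqs_T X σ' rest (x0 :: done) ?_ ?_
        · intro i h y hy
          have := hdep (i + 1) (by simpa using Nat.succ_lt_succ h) y (by simpa using hy)
          simp only [List.take_succ_cons, List.map_cons, List.mem_cons] at this ⊢
          tauto
        · intro p hp
          exact hs p (by simp [hp])
      rw [commEqs]
      refine HoareT.cons (HoareT.seq ?_ hIH) (le_refl _) ?_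
      case refine_2 =>
        intro σ hσ x hx
        apply hσ
        simp only [List.map_cons, List.mem_cons] at hx ⊢
        tauto
      · by_cases h0 : x0 ∈ X ∨ x0 ∈ done
        · rw [if_pos h0]
          refine HoareT.guard (HoareT.cons HoareT.skip (le_refl _) ?_) ?_
          · intro σ hσ x hx
            rcases hx with hx | hx
            · exact hσ x (Or.inl hx)
            · rcases List.mem_cons.1 hx with rfl | hx
              · exact hσ x h0
              · exact hσ x (Or.inr hx)
          · intro σ hσ
            refine my_sat_litDC _ hs0 ?_
            intro y hy
            simp only [eqLit, varsL, varsA, varsT, List.mem_append,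
              List.mem_singleton] at hy
            rcases hy with rfl | hy
            · exact (hσ y h0).2
            · exact (hσ y (hvars0 y hy)).2
        · rw [if_neg h0]
          refine HoareT.cons HoareT.assign ?_ (le_refl _)
          intro σ hσ
          intro x hx
          by_cases hxx : x = x0
          · subst hxx
            have ht : evalT σ t0 = evalT σ' t0 :=
              my_evalT_congr _ _ _ (fun y hy => (hσ y (hvars0 y hy)).2)
            simp [Function.update_self, ht, hd2, hd1]
          · rw [Function.update_of_ne hxx]
            apply hσ
            rcases hx with hx | hx
            · exact Or.inl hx
            · rcases List.mem_cons.1 hx with h | h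
              · exact absurd h hxx
              · exact Or.inr h

/-- completeness of commandification: if σ' satisfies all the literals,
the generated command satisfies the total-correctness triple
{ ⋀_{x∈X} x ≐ σ'(x) } π { ⋀_{x∈X∪{x_1,…,x_n}} x ≐ σ'(x) }. -/
theorem commandify_complete {V D : Type} [DecidableEq V] (X : Set V)
    (eqs : List (V × DTerm V D)) (rest : List (Lit V D))
    (hreq : CommReq X eqs rest) (σ' : Assg V D)
    (hσ' : ∀ l ∈ commLits eqs rest, satL σ' l) :
    HoareT {σ : Assg V D | ∀ x ∈ X, (σ x).isSome ∧ σ x = σ' x}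
      (commandify X eqs rest)
      {σ : Assg V D | ∀ x, x ∈ X ∨ x ∈ eqs.map Prod.fst → (σ x).isSome ∧ σ x = σ' x} := by
  obtain ⟨hr1, hr2⟩ := hreq
  have h1 : HoareT {σ : Assg V D | ∀ x, (x ∈ X ∨ x ∈ ([] : List V)) →
        (σ x).isSome ∧ σ x = σ' x}
      (commEqs X [] eqs)
      {σ : Assg V D | ∀ x, (x ∈ X ∨ x ∈ ([] : List V) ∨ x ∈ eqs.map Prod.fst) →
        (σ x).isSome ∧ σ x = σ' x} := by
    refine my_commEqs_T X σ' eqs [] ?_ ?_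
    · intro i h y hy
      have := hr2 i h y hy
      simpa using this
    · intro p hp
      exact hσ' _ (by
        simp only [commLits, List.mem_append, List.mem_map]
        exact Or.inl ⟨p, hp, rfl⟩)
  have h2 : HoareT
      {σ : Assg V D | ∀ x ∈ {y | y ∈ X ∨ y ∈ eqs.map Prod.fst},
        (σ x).isSome ∧ σ x = σ' x}
      (commRest rest)
      {σ : Assg V D | ∀ x ∈ {y | y ∈ X ∨ y ∈ eqs.map Prod.fst},
        (σ x).isSome ∧ σ x = σ' x} := by
    refine my_commRest_T σ' _ rest ?_ ?_
    · intro l hl y hy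
      exact hr1 l (by simp [commLits, hl]) y hy
    · intro l hl
      exact hσ' l (by simp [commLits, hl])
  refine HoareT.cons
    (P1' := {σ : Assg V D | ∀ x, (x ∈ X ∨ x ∈ ([] : List V)) → (σ x).isSome ∧ σ x = σ' x})
    (HoareT.seq (HoareT.cons h1 (le_refl _) ?_) h2) ?_ ?_
  · intro σ hσ x hx
    refine hσ x ?_
    rcases hx with hx | hx
    · exact Or.inl hx
    · exact Or.inr (Or.inr hx)
  · intro σ hσ x hx
    rcases hx with hx | hx
    · exact hσ x hx
    · simp at hx
  · intro σ hσ x hx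
    exact hσ x hx
end
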